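/- Let Z = {z ∈ {0,1}^d : Σ_{i∈[d]} z_i ≤ κ} for some κ ∈ {1, …, d}, and let Δ₁ = {(w, z) ∈ {0,1} × Z : w ≤ Σ_{i∈[d]} z_i}. Then conv(Δ₁) = {(w, z) ∈ [0,1]^{1+d} : w ≤ Σ_{i∈[d]} z_i and Σ_{i∈[d]} z_i ≤ κ}. -/

import Mathlib

open Finset
open scoped Classical

private lemma between_mem {E : Type*} [AddCommGroup E] [Module ℝ E] {s : Set E}
    (hs : Convex ℝ s) {t₁ t₂ : ℝ} (h₁ : 0 < t₁) (h₂ : 0 < t₂) {q v : E}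
    (hx : q + t₂ • v ∈ s) (hy : q - t₁ • v ∈ s) : q ∈ s := by
  have hsum : (0:ℝ) < t₁ + t₂ := by linarith
  have hab : t₁/(t₁+t₂) + t₂/(t₁+t₂) = 1 := by
    rw [← add_div, div_self hsum.ne']
  have key : (t₁/(t₁+t₂)) • (q + t₂ • v) + (t₂/(t₁+t₂)) • (q - t₁ • v) = q := by
    match_scalars <;> field_simp <;> ring
  have := hs hx hy (by positivity) (by positivity) hab
  rwa [key] at this

noncomputable def fzc {d : ℕ} (z : Fin d → ℝ) : ℕ :=
  (univ.filter fun i => ¬(z i = 0 ∨ z i = 1)).card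

noncomputable def wcc (w : ℝ) : ℕ := if w = 0 ∨ w = 1 then 0 else 1

lemma wcc_eq_zero {w : ℝ} (h : w = 0 ∨ w = 1) : wcc w = 0 := by simp [wcc, h]

lemma wcc_eq_one {w : ℝ} (h : ¬(w = 0 ∨ w = 1)) : wcc w = 1 := by simp [wcc, h]

lemma wcc_le (w : ℝ) : wcc w ≤ 1 := by unfold wcc; split <;> omega

lemma fzc_le {d : ℕ} {z z' : Fin d → ℝ}
    (h : ∀ m, ¬(z' m = 0 ∨ z' m = 1) → ¬(z m = 0 ∨ z m = 1)) : fzc z' ≤ fzc z := by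
  apply card_le_card
  intro m hm
  simp only [mem_filter, mem_univ, true_and] at hm ⊢
  exact h m hm

lemma fzc_lt {d : ℕ} {z z' : Fin d → ℝ} {k : Fin d} (hk : ¬(z k = 0 ∨ z k = 1))
    (h1 : z' k = 0 ∨ z' k = 1)
    (h : ∀ m, ¬(z' m = 0 ∨ z' m = 1) → ¬(z m = 0 ∨ z m = 1)) : fzc z' < fzc z := by
  have hkmem : k ∈ univ.filter fun m => ¬(z m = 0 ∨ z m = 1) :=
    mem_filter.mpr ⟨mem_univ _, hk⟩
  have hsub : (univ.filter fun m => ¬(z' m = 0 ∨ z' m = 1)) ⊆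
      (univ.filter fun m => ¬(z m = 0 ∨ z m = 1)).erase k := by
    intro m hm
    simp only [mem_filter, mem_univ, true_and] at hm
    refine Finset.mem_erase.mpr ⟨?_, mem_filter.mpr ⟨mem_univ _, h m hm⟩⟩
    rintro rfl; exact hm h1
  have h1' : fzc z' ≤ ((univ.filter fun m => ¬(z m = 0 ∨ z m = 1)).erase k).card :=
    card_le_card hsub
  have h2' : ((univ.filter fun m => ¬(z m = 0 ∨ z m = 1)).erase k).card = fzc z - 1 :=
    Finset.card_erase_of_mem hkmem
  have h3' : 0 < fzc z := Finset.card_pos.mpr ⟨k, hkmem⟩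
  omega

lemma sum_mem_nat {d : ℕ} (z : Fin d → ℝ) (t : Finset (Fin d))
    (h : ∀ j ∈ t, z j = 0 ∨ z j = 1) : ∃ n : ℕ, ∑ j ∈ t, z j = n := by
  induction t using Finset.cons_induction with
  | empty => exact ⟨0, by simp⟩
  | cons a s ha ih =>
    obtain ⟨n, hn⟩ := ih (fun j hj => h j (by simp [hj]))
    rcases h a (by simp) with h0 | h1
    · exact ⟨n, by rw [Finset.sum_cons, hn, h0]; ring⟩
    · exact ⟨n+1, by rw [Finset.sum_cons, hn, h1]; push_cast; ring⟩

lemma int_01 {x : ℝ} (m κ : ℕ) (hx : x = (κ:ℝ) - m) (h0 : 0 ≤ x) (h1 : x ≤ 1) :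
    x = 0 ∨ x = 1 := by
  subst hx
  have hm : m ≤ κ := by exact_mod_cast (by linarith : (m:ℝ) ≤ κ)
  have hk : κ ≤ m + 1 := by exact_mod_cast (by push_cast; linarith : (κ:ℝ) ≤ (m:ℝ) + 1)
  have : κ = m ∨ κ = m + 1 := by omega
  rcases this with rfl | rfl
  · left; ring
  · right; push_cast; ring

private lemma key (d κ : ℕ) (hκ1 : 1 ≤ κ) :
    ∀ n : ℕ, ∀ q : ℝ × (Fin d → ℝ),
      fzc q.2 + wcc q.1 ≤ n →
      0 ≤ q.1 → q.1 ≤ 1 → (∀ i, 0 ≤ q.2 i) → (∀ i, q.2 i ≤ 1) →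
      q.1 ≤ ∑ i, q.2 i → (∑ i, q.2 i) ≤ (κ : ℝ) →
      q ∈ convexHull ℝ {p : ℝ × (Fin d → ℝ) |
        (p.1 = 0 ∨ p.1 = 1) ∧
        ((∀ i, p.2 i = 0 ∨ p.2 i = 1) ∧ (∑ i, p.2 i) ≤ (κ : ℝ)) ∧
        p.1 ≤ ∑ i, p.2 i} := by
  intro n
  induction n with
  | zero =>
    intro q hn h0 h1 hz0 hz1 hws hsκ
    have hfz : fzc q.2 = 0 := by omega
    have hwc : wcc q.1 = 0 := by omega
    have hw : q.1 = 0 ∨ q.1 = 1 := by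
      by_contra hcon
      rw [wcc_eq_one hcon] at hwc; omega
    have hz : ∀ i, q.2 i = 0 ∨ q.2 i = 1 := by
      intro i
      by_contra hcon
      have : i ∈ univ.filter fun m => ¬(q.2 m = 0 ∨ q.2 m = 1) :=
        mem_filter.mpr ⟨mem_univ _, hcon⟩
      have := Finset.card_pos.mpr ⟨i, this⟩
      have : 0 < fzc q.2 := this
      omega
    exact subset_convexHull ℝ _ ⟨hw, ⟨hz, hsκ⟩, hws⟩
  | succ n ih =>
    intro q hn h0 h1 hz0 hz1 hws hsκ
    by_cases hall : fzc q.2 + wcc q.1 = 0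
    · exact ih q (by omega) h0 h1 hz0 hz1 hws hsκ
    have hconv : Convex ℝ (convexHull ℝ {p : ℝ × (Fin d → ℝ) |
        (p.1 = 0 ∨ p.1 = 1) ∧
        ((∀ i, p.2 i = 0 ∨ p.2 i = 1) ∧ (∑ i, p.2 i) ≤ (κ : ℝ)) ∧
        p.1 ≤ ∑ i, p.2 i}) := convex_convexHull ℝ _
    by_cases hc2 : 2 ≤ fzc q.2
    · -- Case 1 : two fractional z-coordinates
      obtain ⟨i, hi, j, hj, hij⟩ := Finset.one_lt_card.mp (show 1 < (univ.filter
          fun m => ¬(q.2 m = 0 ∨ q.2 m = 1)).card from hc2)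
      have hfi : ¬(q.2 i = 0 ∨ q.2 i = 1) := (mem_filter.mp hi).2
      have hfj : ¬(q.2 j = 0 ∨ q.2 j = 1) := (mem_filter.mp hj).2
      push_neg at hfi hfj
      have hi0 : 0 < q.2 i := lt_of_le_of_ne (hz0 i) (Ne.symm hfi.1)
      have hi1 : q.2 i < 1 := lt_of_le_of_ne (hz1 i) hfi.2
      have hj0 : 0 < q.2 j := lt_of_le_of_ne (hz0 j) (Ne.symm hfj.1)
      have hj1 : q.2 j < 1 := lt_of_le_of_ne (hz1 j) hfj.2
      set v : ℝ × (Fin d → ℝ) :=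
        ((0:ℝ), fun m => (if m = i then (1:ℝ) else 0) - (if m = j then 1 else 0)) with hv
      have hvi : v.2 i = 1 := by simp [hv, hij]
      have hvj : v.2 j = -1 := by simp [hv, Ne.symm hij]
      have hvm : ∀ m, m ≠ i → m ≠ j → v.2 m = 0 := by
        intro m hmi hmj; simp [hv, hmi, hmj]
      have hvsum : ∑ m, v.2 m = 0 := by
        simp [hv, Finset.sum_sub_distrib, Finset.sum_ite_eq']
      set t₂ := min (1 - q.2 i) (q.2 j) with ht₂def
      set t₁ := min (q.2 i) (1 - q.2 j) with ht₁def
      have ht₂ : 0 < t₂ := lt_min (by linarith) hj0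
      have ht₁ : 0 < t₁ := lt_min hi0 (by linarith)
      -- endpoint x = q + t₂ • v
      have hx1 : (q + t₂ • v).1 = q.1 := by simp [hv]
      have hx2 : ∀ m, (q + t₂ • v).2 m = q.2 m + t₂ * v.2 m := by intro m; simp
      have hxsum : ∑ m, (q + t₂ • v).2 m = ∑ m, q.2 m := by
        simp only [hx2]
        rw [Finset.sum_add_distrib, ← Finset.mul_sum, hvsum]; ring
      have hxmem : (q + t₂ • v) ∈ convexHull ℝ {p : ℝ × (Fin d → ℝ) |
          (p.1 = 0 ∨ p.1 = 1) ∧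
          ((∀ i, p.2 i = 0 ∨ p.2 i = 1) ∧ (∑ i, p.2 i) ≤ (κ : ℝ)) ∧
          p.1 ≤ ∑ i, p.2 i} := by
        apply ih
        · -- count
          have hle : fzc (q + t₂ • v).2 < fzc q.2 := by
            have hmono : ∀ m, ¬((q + t₂ • v).2 m = 0 ∨ (q + t₂ • v).2 m = 1) →
                ¬(q.2 m = 0 ∨ q.2 m = 1) := by
              intro m hm
              by_cases hmi : m = i
              · rw [hmi]; exact not_or.mpr hfi
              by_cases hmj : m = j
              · rw [hmj]; exact not_or.mpr hfj
              · rw [hx2 m, hvm m hmi hmj] at hm; simpa using hm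
            rcases min_cases (1 - q.2 i) (q.2 j) with ⟨he, _⟩ | ⟨he, _⟩
            · refine fzc_lt (k := i) (by rw [not_or]; exact hfi) ?_ hmono
              right; rw [hx2 i, hvi, ht₂def, he]; ring
            · refine fzc_lt (k := j) (by rw [not_or]; exact hfj) ?_ hmono
              left; rw [hx2 j, hvj, ht₂def, he]; ring
          rw [hx1]
          omega
        · rw [hx1]; exact h0
        · rw [hx1]; exact h1
        · intro m
          rw [hx2 m]
          by_cases hmi : m = i
          · rw [hmi, hvi]; linarith
          by_cases hmj : m = j
          · rw [hmj, hvj]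
            have : t₂ ≤ q.2 j := min_le_right _ _
            linarith
          · rw [hvm m hmi hmj]; simpa using hz0 m
        · intro m
          rw [hx2 m]
          by_cases hmi : m = i
          · rw [hmi, hvi]
            have : t₂ ≤ 1 - q.2 i := min_le_left _ _
            linarith
          by_cases hmj : m = j
          · rw [hmj, hvj]; linarith
          · rw [hvm m hmi hmj]; simpa using hz1 m
        · rw [hx1, hxsum]; exact hws
        · rw [hxsum]; exact hsκ
      -- endpoint y = q - t₁ • v
      have hy1 : (q - t₁ • v).1 = q.1 := by simp [hv]
      have hy2 : ∀ m, (q - t₁ • v).2 m = q.2 m - t₁ * v.2 m := by intro m; simp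
      have hysum : ∑ m, (q - t₁ • v).2 m = ∑ m, q.2 m := by
        simp only [hy2]
        rw [Finset.sum_sub_distrib, ← Finset.mul_sum, hvsum]; ring
      have hymem : (q - t₁ • v) ∈ convexHull ℝ {p : ℝ × (Fin d → ℝ) |
          (p.1 = 0 ∨ p.1 = 1) ∧
          ((∀ i, p.2 i = 0 ∨ p.2 i = 1) ∧ (∑ i, p.2 i) ≤ (κ : ℝ)) ∧
          p.1 ≤ ∑ i, p.2 i} := by
        apply ih
        · have hle : fzc (q - t₁ • v).2 < fzc q.2 := by
            have hmono : ∀ m, ¬((q - t₁ • v).2 m = 0 ∨ (q - t₁ • v).2 m = 1) →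
                ¬(q.2 m = 0 ∨ q.2 m = 1) := by
              intro m hm
              by_cases hmi : m = i
              · rw [hmi]; exact not_or.mpr hfi
              by_cases hmj : m = j
              · rw [hmj]; exact not_or.mpr hfj
              · rw [hy2 m, hvm m hmi hmj] at hm; simpa using hm
            rcases min_cases (q.2 i) (1 - q.2 j) with ⟨he, _⟩ | ⟨he, _⟩
            · refine fzc_lt (k := i) (by rw [not_or]; exact hfi) ?_ hmono
              left; rw [hy2 i, hvi, ht₁def, he]; ring
            · refine fzc_lt (k := j) (by rw [not_or]; exact hfj) ?_ hmono
              right; rw [hy2 j, hvj, ht₁def, he]; ring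
          rw [hy1]
          omega
        · rw [hy1]; exact h0
        · rw [hy1]; exact h1
        · intro m
          rw [hy2 m]
          by_cases hmi : m = i
          · rw [hmi, hvi]
            have : t₁ ≤ q.2 i := min_le_left _ _
            linarith
          by_cases hmj : m = j
          · rw [hmj, hvj]; linarith
          · rw [hvm m hmi hmj]; simpa using hz0 m
        · intro m
          rw [hy2 m]
          by_cases hmi : m = i
          · rw [hmi, hvi]; linarith
          by_cases hmj : m = j
          · rw [hmj, hvj]
            have : t₁ ≤ 1 - q.2 j := min_le_right _ _
            linarith
          · rw [hvm m hmi hmj]; simpa using hz1 m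
        · rw [hy1, hysum]; exact hws
        · rw [hysum]; exact hsκ
      exact between_mem hconv ht₁ ht₂ hxmem hymem
    -- now fzc q.2 ≤ 1
    by_cases hc1 : fzc q.2 = 1
    · obtain ⟨i, hione⟩ := Finset.card_eq_one.mp (show (univ.filter
          fun m => ¬(q.2 m = 0 ∨ q.2 m = 1)).card = 1 from hc1)
      have hfi : ¬(q.2 i = 0 ∨ q.2 i = 1) := by
        have : i ∈ univ.filter fun m => ¬(q.2 m = 0 ∨ q.2 m = 1) := by
          rw [hione]; exact mem_singleton_self i
        exact (mem_filter.mp this).2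
      have hinteg : ∀ j, j ≠ i → (q.2 j = 0 ∨ q.2 j = 1) := by
        intro j hji
        by_contra hcon
        have : j ∈ univ.filter fun m => ¬(q.2 m = 0 ∨ q.2 m = 1) :=
          mem_filter.mpr ⟨mem_univ _, hcon⟩
        rw [hione, mem_singleton] at this
        exact hji this
      obtain ⟨m, hm⟩ := sum_mem_nat q.2 (univ.erase i)
        (fun j hj => hinteg j (Finset.ne_of_mem_erase hj))
      have hsm : ∑ j, q.2 j = q.2 i + m := by
        rw [← Finset.sum_erase_add univ q.2 (mem_univ i), hm]; ring
      have hfi' := hfi; push_neg at hfi'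
      have hi0 : 0 < q.2 i := lt_of_le_of_ne (hz0 i) (Ne.symm hfi'.1)
      have hi1 : q.2 i < 1 := lt_of_le_of_ne (hz1 i) hfi'.2
      have hκs : 0 < (κ:ℝ) - ∑ j, q.2 j := by
        rcases lt_or_ge (∑ j, q.2 j) (κ:ℝ) with hlt | hge
        · linarith
        · exfalso
          have hqi : q.2 i = (κ:ℝ) - m := by linarith
          exact hfi (int_01 m κ hqi (hz0 i) (hz1 i))
      by_cases hwf : q.1 = 0 ∨ q.1 = 1
      · -- Case 3 : w integral, one fractional z-coordinate
        set v : ℝ × (Fin d → ℝ) := ((0:ℝ), fun m => if m = i then (1:ℝ) else 0) with hv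
        have hvi : v.2 i = 1 := by simp [hv]
        have hvm : ∀ m, m ≠ i → v.2 m = 0 := by intro m hmi; simp [hv, hmi]
        have hvsum : ∑ m, v.2 m = 1 := by simp [hv, Finset.sum_ite_eq']
        set t₂ := min (1 - q.2 i) ((κ:ℝ) - ∑ j, q.2 j) with ht₂def
        set t₁ := q.2 i with ht₁def
        have ht₂ : 0 < t₂ := lt_min (by linarith) hκs
        have ht₂b : t₂ ≤ 1 - q.2 i := min_le_left _ _
        have ht₁ : 0 < t₁ := hi0
        have hx1 : (q + t₂ • v).1 = q.1 := by simp [hv]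
        have hx2 : ∀ m, (q + t₂ • v).2 m = q.2 m + t₂ * v.2 m := by intro m; simp
        have hxsum : ∑ m, (q + t₂ • v).2 m = (∑ m, q.2 m) + t₂ := by
          simp only [hx2]
          rw [Finset.sum_add_distrib, ← Finset.mul_sum, hvsum]; ring
        have hy1 : (q - t₁ • v).1 = q.1 := by simp [hv]
        have hy2 : ∀ m, (q - t₁ • v).2 m = q.2 m - t₁ * v.2 m := by intro m; simp
        have hysum : ∑ m, (q - t₁ • v).2 m = (∑ m, q.2 m) - t₁ := by
          simp only [hy2]
          rw [Finset.sum_sub_distrib, ← Finset.mul_sum, hvsum]; ring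
        have hmono : ∀ w : ℝ × (Fin d → ℝ), (∀ m, m ≠ i → w.2 m = q.2 m) →
            ∀ m, ¬(w.2 m = 0 ∨ w.2 m = 1) → ¬(q.2 m = 0 ∨ q.2 m = 1) := by
          intro w hw m hm
          by_cases hmi : m = i
          · rw [hmi]; exact hfi
          · rw [hw m hmi] at hm; exact hm
        have hxmem : (q + t₂ • v) ∈ convexHull ℝ {p : ℝ × (Fin d → ℝ) |
            (p.1 = 0 ∨ p.1 = 1) ∧
            ((∀ i, p.2 i = 0 ∨ p.2 i = 1) ∧ (∑ i, p.2 i) ≤ (κ : ℝ)) ∧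
            p.1 ≤ ∑ i, p.2 i} := by
          apply ih
          · have hlt : fzc (q + t₂ • v).2 < fzc q.2 := by
              refine fzc_lt (k := i) hfi ?_
                (hmono _ (fun m hmi => by rw [hx2 m, hvm m hmi]; ring))
              rw [hx2 i, hvi]
              rcases min_cases (1 - q.2 i) ((κ:ℝ) - ∑ j, q.2 j) with ⟨he, _⟩ | ⟨he, hlt'⟩
              · right; rw [ht₂def, he]; ring
              · refine int_01 m κ ?_ (by linarith) (by linarith)
                rw [ht₂def, he]; rw [hsm]; push_cast; ring
            rw [hx1]; omega
          · rw [hx1]; exact h0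
          · rw [hx1]; exact h1
          · intro m'
            rw [hx2 m']
            by_cases hmi : m' = i
            · rw [hmi, hvi]; linarith
            · rw [hvm m' hmi]; simpa using hz0 m'
          · intro m'
            rw [hx2 m']
            by_cases hmi : m' = i
            · rw [hmi, hvi]
              have : t₂ ≤ 1 - q.2 i := min_le_left _ _
              linarith
            · rw [hvm m' hmi]; simpa using hz1 m'
          · rw [hx1, hxsum]; linarith
          · rw [hxsum]
            have : t₂ ≤ (κ:ℝ) - ∑ j, q.2 j := min_le_right _ _
            linarith
        have hymem : (q - t₁ • v) ∈ convexHull ℝ {p : ℝ × (Fin d → ℝ) |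
            (p.1 = 0 ∨ p.1 = 1) ∧
            ((∀ i, p.2 i = 0 ∨ p.2 i = 1) ∧ (∑ i, p.2 i) ≤ (κ : ℝ)) ∧
            p.1 ≤ ∑ i, p.2 i} := by
          apply ih
          · have hlt : fzc (q - t₁ • v).2 < fzc q.2 := by
              refine fzc_lt (k := i) hfi ?_
                (hmono _ (fun m hmi => by rw [hy2 m, hvm m hmi]; ring))
              left; rw [hy2 i, hvi, ht₁def]; ring
            rw [hy1]; omega
          · rw [hy1]; exact h0
          · rw [hy1]; exact h1
          · intro m'
            rw [hy2 m']
            by_cases hmi : m' = i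
            · rw [hmi, hvi, ht₁def]; linarith
            · rw [hvm m' hmi]; simpa using hz0 m'
          · intro m'
            rw [hy2 m']
            by_cases hmi : m' = i
            · rw [hmi, hvi, ht₁def]; linarith
            · rw [hvm m' hmi]; simpa using hz1 m'
          · rw [hy1, hysum, ht₁def]
            have hysm : (∑ m, q.2 m) - q.2 i = (m:ℝ) := by linarith [hsm]
            rw [hysm]
            rcases hwf with hw0 | hw1
            · rw [hw0]; positivity
            · rw [hw1]
              have hmpos : (0:ℝ) < m := by
                have := hws; rw [hw1] at this; linarith [hsm, hi1]
              have : (1:ℕ) ≤ m := by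
                by_contra hcon
                push_neg at hcon
                interval_cases m
                · simp at hmpos
              exact_mod_cast this
          · rw [hysum, ht₁def]; linarith
        exact between_mem hconv ht₁ ht₂ hxmem hymem
      · -- Case 2 : w fractional and one fractional z-coordinate
        have hwf' := hwf; push_neg at hwf'
        have hw0 : 0 < q.1 := lt_of_le_of_ne h0 (Ne.symm hwf'.1)
        have hw1 : q.1 < 1 := lt_of_le_of_ne h1 hwf'.2
        set v : ℝ × (Fin d → ℝ) := ((1:ℝ), fun m => if m = i then (1:ℝ) else 0) with hv
        have hvi : v.2 i = 1 := by simp [hv]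
        have hvm : ∀ m, m ≠ i → v.2 m = 0 := by intro m hmi; simp [hv, hmi]
        have hvsum : ∑ m, v.2 m = 1 := by simp [hv, Finset.sum_ite_eq']
        set t₂ := min (1 - q.1) (min (1 - q.2 i) ((κ:ℝ) - ∑ j, q.2 j)) with ht₂def
        set t₁ := min q.1 (q.2 i) with ht₁def
        have ht₂ : 0 < t₂ := lt_min (by linarith) (lt_min (by linarith) hκs)
        have ht₁ : 0 < t₁ := lt_min hw0 hi0
        have ht₂a : t₂ ≤ 1 - q.1 := min_le_left _ _
        have ht₂b : t₂ ≤ 1 - q.2 i := le_trans (min_le_right _ _) (min_le_left _ _)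
        have ht₂c : t₂ ≤ (κ:ℝ) - ∑ j, q.2 j := le_trans (min_le_right _ _) (min_le_right _ _)
        have hx1 : (q + t₂ • v).1 = q.1 + t₂ := by simp [hv]
        have hx2 : ∀ m, (q + t₂ • v).2 m = q.2 m + t₂ * v.2 m := by intro m; simp
        have hxsum : ∑ m, (q + t₂ • v).2 m = (∑ m, q.2 m) + t₂ := by
          simp only [hx2]
          rw [Finset.sum_add_distrib, ← Finset.mul_sum, hvsum]; ring
        have hy1 : (q - t₁ • v).1 = q.1 - t₁ := by simp [hv]
        have hy2 : ∀ m, (q - t₁ • v).2 m = q.2 m - t₁ * v.2 m := by intro m; simp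
        have hysum : ∑ m, (q - t₁ • v).2 m = (∑ m, q.2 m) - t₁ := by
          simp only [hy2]
          rw [Finset.sum_sub_distrib, ← Finset.mul_sum, hvsum]; ring
        have hmono : ∀ w : ℝ × (Fin d → ℝ), (∀ m, m ≠ i → w.2 m = q.2 m) →
            ∀ m, ¬(w.2 m = 0 ∨ w.2 m = 1) → ¬(q.2 m = 0 ∨ q.2 m = 1) := by
          intro w hw m hm
          by_cases hmi : m = i
          · rw [hmi]; exact hfi
          · rw [hw m hmi] at hm; exact hm
        have hwcq : wcc q.1 = 1 := wcc_eq_one hwf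
        have hxmem : (q + t₂ • v) ∈ convexHull ℝ {p : ℝ × (Fin d → ℝ) |
            (p.1 = 0 ∨ p.1 = 1) ∧
            ((∀ i, p.2 i = 0 ∨ p.2 i = 1) ∧ (∑ i, p.2 i) ≤ (κ : ℝ)) ∧
            p.1 ≤ ∑ i, p.2 i} := by
          apply ih
          · have hmono' := hmono _ (fun m hmi => by rw [hx2 m, hvm m hmi]; ring)
            have hfle : fzc (q + t₂ • v).2 ≤ fzc q.2 := fzc_le hmono'
            have htri : t₂ = 1 - q.1 ∨ t₂ = 1 - q.2 i ∨ t₂ = (κ:ℝ) - ∑ j, q.2 j := by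
              rcases min_cases (1 - q.1) (min (1 - q.2 i) ((κ:ℝ) - ∑ j, q.2 j)) with
                ⟨he, _⟩ | ⟨he, _⟩
              · left; rw [ht₂def, he]
              · rcases min_cases (1 - q.2 i) ((κ:ℝ) - ∑ j, q.2 j) with ⟨he2, _⟩ | ⟨he2, _⟩
                · right; left; rw [ht₂def, he, he2]
                · right; right; rw [ht₂def, he, he2]
            rcases htri with he | he | he
            · have : wcc (q + t₂ • v).1 = 0 := by
                apply wcc_eq_zero; right; rw [hx1, he]; ring
              omega
            · have : fzc (q + t₂ • v).2 < fzc q.2 := by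
                refine fzc_lt (k := i) hfi ?_ hmono'
                right; rw [hx2 i, hvi, he]; ring
              have := wcc_le (q + t₂ • v).1
              omega
            · have : fzc (q + t₂ • v).2 < fzc q.2 := by
                refine fzc_lt (k := i) hfi ?_ hmono'
                rw [hx2 i, hvi]
                refine int_01 m κ ?_ (by linarith) (by linarith)
                rw [he, hsm]; push_cast; ring
              have := wcc_le (q + t₂ • v).1
              omega
          · rw [hx1]; linarith
          · rw [hx1]; linarith
          · intro m'
            rw [hx2 m']
            by_cases hmi : m' = i
            · rw [hmi, hvi]; linarith
            · rw [hvm m' hmi]; simpa using hz0 m'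
          · intro m'
            rw [hx2 m']
            by_cases hmi : m' = i
            · rw [hmi, hvi]; linarith
            · rw [hvm m' hmi]; simpa using hz1 m'
          · rw [hx1, hxsum]; linarith
          · rw [hxsum]; linarith
        have hymem : (q - t₁ • v) ∈ convexHull ℝ {p : ℝ × (Fin d → ℝ) |
            (p.1 = 0 ∨ p.1 = 1) ∧
            ((∀ i, p.2 i = 0 ∨ p.2 i = 1) ∧ (∑ i, p.2 i) ≤ (κ : ℝ)) ∧
            p.1 ≤ ∑ i, p.2 i} := by
          apply ih
          · have hmono' := hmono _ (fun m hmi => by rw [hy2 m, hvm m hmi]; ring)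
            have hfle : fzc (q - t₁ • v).2 ≤ fzc q.2 := fzc_le hmono'
            rcases min_cases q.1 (q.2 i) with ⟨he, _⟩ | ⟨he, _⟩
            · have : wcc (q - t₁ • v).1 = 0 := by
                apply wcc_eq_zero; left; rw [hy1, ht₂def] at *; rw [ht₁def, he]; ring
              omega
            · have : fzc (q - t₁ • v).2 < fzc q.2 := by
                refine fzc_lt (k := i) hfi ?_ hmono'
                left; rw [hy2 i, hvi, ht₁def, he]; ring
              have := wcc_le (q - t₁ • v).1
              omega
          · rw [hy1]
            have : t₁ ≤ q.1 := min_le_left _ _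
            linarith
          · rw [hy1]; linarith
          · intro m'
            rw [hy2 m']
            by_cases hmi : m' = i
            · rw [hmi, hvi]
              have : t₁ ≤ q.2 i := min_le_right _ _
              linarith
            · rw [hvm m' hmi]; simpa using hz0 m'
          · intro m'
            rw [hy2 m']
            by_cases hmi : m' = i
            · rw [hmi, hvi]; linarith
            · rw [hvm m' hmi]; simpa using hz1 m'
          · rw [hy1, hysum]; linarith
          · rw [hysum]; linarith
        exact between_mem hconv ht₁ ht₂ hxmem hymem
    · -- Case 4 : all z integral, w fractional
      have hfz0 : fzc q.2 = 0 := by omega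
      have hwf : ¬(q.1 = 0 ∨ q.1 = 1) := by
        intro hcon
        have := wcc_eq_zero hcon
        omega
      have hwf' := hwf; push_neg at hwf'
      have hw0 : 0 < q.1 := lt_of_le_of_ne h0 (Ne.symm hwf'.1)
      have hw1 : q.1 < 1 := lt_of_le_of_ne h1 hwf'.2
      have hinteg : ∀ j, q.2 j = 0 ∨ q.2 j = 1 := by
        intro j
        by_contra hcon
        have : j ∈ univ.filter fun m => ¬(q.2 m = 0 ∨ q.2 m = 1) :=
          mem_filter.mpr ⟨mem_univ _, hcon⟩
        have : 0 < fzc q.2 := Finset.card_pos.mpr ⟨j, this⟩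
        omega
      obtain ⟨m, hm⟩ := sum_mem_nat q.2 univ (fun j _ => hinteg j)
      have hm1 : (1:ℝ) ≤ m := by
        have hmpos : (0:ℝ) < m := by rw [← hm]; linarith
        have : (1:ℕ) ≤ m := by
          by_contra hcon
          push_neg at hcon
          interval_cases m
          · simp at hmpos
        exact_mod_cast this
      set v : ℝ × (Fin d → ℝ) := ((1:ℝ), (0 : Fin d → ℝ)) with hv
      set t₂ := 1 - q.1 with ht₂def
      set t₁ := q.1 with ht₁def
      have ht₂ : 0 < t₂ := by rw [ht₂def]; linarith
      have ht₁ : 0 < t₁ := hw0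
      have hx1 : (q + t₂ • v).1 = 1 := by simp [hv, ht₂def]; rw [ht₁def]; ring
      have hx2 : (q + t₂ • v).2 = q.2 := by funext m'; simp [hv]
      have hy1 : (q - t₁ • v).1 = 0 := by simp [hv, ht₁def]
      have hy2 : (q - t₁ • v).2 = q.2 := by funext m'; simp [hv]
      have hxmem : (q + t₂ • v) ∈ convexHull ℝ {p : ℝ × (Fin d → ℝ) |
          (p.1 = 0 ∨ p.1 = 1) ∧
          ((∀ i, p.2 i = 0 ∨ p.2 i = 1) ∧ (∑ i, p.2 i) ≤ (κ : ℝ)) ∧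
          p.1 ≤ ∑ i, p.2 i} := by
        apply ih
        · rw [hx2, hfz0, wcc_eq_zero (Or.inr hx1)]; omega
        · rw [hx1]; linarith
        · rw [hx1]
        · rw [hx2]; exact hz0
        · rw [hx2]; exact hz1
        · rw [hx1, hx2, hm]; exact hm1
        · rw [hx2]; exact hsκ
      have hymem : (q - t₁ • v) ∈ convexHull ℝ {p : ℝ × (Fin d → ℝ) |
          (p.1 = 0 ∨ p.1 = 1) ∧
          ((∀ i, p.2 i = 0 ∨ p.2 i = 1) ∧ (∑ i, p.2 i) ≤ (κ : ℝ)) ∧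
          p.1 ≤ ∑ i, p.2 i} := by
        apply ih
        · rw [hy2, hfz0, wcc_eq_zero (Or.inl hy1)]; omega
        · rw [hy1]
        · rw [hy1]; linarith
        · rw [hy2]; exact hz0
        · rw [hy2]; exact hz1
        · rw [hy1, hy2]; exact Finset.sum_nonneg (fun j _ => hz0 j)
        · rw [hy2]; exact hsκ
      exact between_mem hconv ht₁ ht₂ hxmem hymem

/-- Convex hull of `Δ₁` for the cardinality constraint set
`Z = {z ∈ {0,1}^d : 1ᵀz ≤ κ}`. -/
theorem convexHull_Delta1_cardinality {d : ℕ} (κ : ℕ) (hκ1 : 1 ≤ κ) (hκd : κ ≤ d) :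
    convexHull ℝ {q : ℝ × (Fin d → ℝ) |
        (q.1 = 0 ∨ q.1 = 1) ∧
        ((∀ i, q.2 i = 0 ∨ q.2 i = 1) ∧ (∑ i, q.2 i) ≤ (κ : ℝ)) ∧
        q.1 ≤ ∑ i, q.2 i}
      = {q : ℝ × (Fin d → ℝ) |
        q.1 ∈ Set.Icc (0 : ℝ) 1 ∧ (∀ i, q.2 i ∈ Set.Icc (0 : ℝ) 1) ∧
        q.1 ≤ ∑ i, q.2 i ∧ (∑ i, q.2 i) ≤ (κ : ℝ)} := by
  apply Set.Subset.antisymm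
  · apply convexHull_min
    · rintro p ⟨hw, ⟨hz, hsκ⟩, hws⟩
      refine ⟨?_, ?_, hws, hsκ⟩
      · rcases hw with h | h <;> rw [h] <;> simp [Set.mem_Icc]
      · intro i
        rcases hz i with h | h <;> rw [h] <;> simp [Set.mem_Icc]
    · rintro x ⟨hx1, hx2, hx3, hx4⟩ y ⟨hy1, hy2, hy3, hy4⟩ a b ha hb hab
      rw [Set.mem_Icc] at hx1 hy1
      have key1 : (a • x + b • y).1 = a * x.1 + b * y.1 := by simp
      have key2 : ∀ i, (a • x + b • y).2 i = a * x.2 i + b * y.2 i := by intro i; simp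
      have keysum : ∑ i, (a • x + b • y).2 i = a * (∑ i, x.2 i) + b * (∑ i, y.2 i) := by
        simp only [key2]
        rw [Finset.sum_add_distrib, ← Finset.mul_sum, ← Finset.mul_sum]
      refine ⟨?_, ?_, ?_, ?_⟩
      · rw [Set.mem_Icc, key1]
        constructor
        · have := mul_nonneg ha hx1.1
          have := mul_nonneg hb hy1.1
          linarith
        · nlinarith [mul_le_mul_of_nonneg_left hx1.2 ha, mul_le_mul_of_nonneg_left hy1.2 hb]
      · intro i
        have hxi := Set.mem_Icc.mp (hx2 i)
        have hyi := Set.mem_Icc.mp (hy2 i)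
        rw [Set.mem_Icc, key2 i]
        constructor
        · have := mul_nonneg ha hxi.1
          have := mul_nonneg hb hyi.1
          linarith
        · nlinarith [mul_le_mul_of_nonneg_left hxi.2 ha, mul_le_mul_of_nonneg_left hyi.2 hb]
      · rw [key1, keysum]
        have := mul_le_mul_of_nonneg_left hx3 ha
        have := mul_le_mul_of_nonneg_left hy3 hb
        linarith
      · rw [keysum]
        have := mul_le_mul_of_nonneg_left hx4 ha
        have := mul_le_mul_of_nonneg_left hy4 hb
        nlinarith
  · rintro q ⟨hq1, hq2, hq3, hq4⟩
    rw [Set.mem_Icc] at hq1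
    exact key d κ hκ1 (fzc q.2 + wcc q.1) q le_rfl hq1.1 hq1.2
      (fun i => (Set.mem_Icc.mp (hq2 i)).1) (fun i => (Set.mem_Icc.mp (hq2 i)).2) hq3 hq4
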